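/- If a hypothesis class H over a countable domain X (with every hypothesis having infinite support) is uniformly generatable with sample complexity d*, then H is uniformly generatable with replay with the same sample complexity d*. Concretely: given a generator G such that for every h in H and every sequence of examples from supp(h), once d* distinct examples have appeared all subsequent outputs of G lie in supp(h) and are previously unseen, one can construct a generator G~ (which repeats the first example until d* distinct examples have been observed, and then copies G) such that for every h in H and every replay sequence for h and G~ (each example lies in supp(h) or equals a previous output of G~), once d* distinct examples have appeared, all subsequent outputs of G~ lie in supp(h) and are previously unseen. -/
import Mathlib


/-- Output of generator `G` after seeing the first `s` examples of the stream `x`. -/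
def Out {X : Type*} (G : List X → X) (x : ℕ → X) (s : ℕ) : X :=
  G ((List.range s).map x)

/-- `x` is a replay sequence for the hypothesis (support) `h` and generator `G`:
every example lies in `h` or equals a previous output of `G`. -/
def ReplaySeq {X : Type*} (h : Set X) (G : List X → X) (x : ℕ → X) : Prop :=
  ∀ t, x t ∈ h ∨ ∃ s, 1 ≤ s ∧ s ≤ t ∧ x t = Out G x s

/-- Uniform-generation success criterion with sample complexity `d`: once `d`
distinct examples have appeared, all subsequent outputs lie in `h` and are
previously unseen. -/
def UnifSucc {X : Type*} [DecidableEq X] (h : Set X) (G : List X → X)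
    (x : ℕ → X) (d : ℕ) : Prop :=
  ∀ t, ((Finset.range t).image x).card = d →
    ∀ s, t ≤ s → Out G x s ∈ h ∧ ∀ r < s, Out G x s ≠ x r

lemma ivt_aux (c : ℕ → ℕ) (h0 : c 0 = 0) (hstep : ∀ n, c (n+1) ≤ c n + 1) :
    ∀ n d, d ≤ c n → ∃ m ≤ n, c m = d := by
  intro n
  induction n with
  | zero => intro d hd; exact ⟨0, le_refl 0, by omega⟩
  | succ n ih =>
    intro d hd
    by_cases hdn : d ≤ c n
    · obtain ⟨m, hm, hcm⟩ := ih d hdn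
      exact ⟨m, le_trans hm (Nat.le_succ n), hcm⟩
    · have := hstep n
      exact ⟨n+1, le_refl _, by omega⟩

/-- If `H` is uniformly generatable with sample complexity `d`, then `H` is
uniformly generatable with replay with the same sample complexity `d`. -/
theorem statement0 {X : Type*} [Countable X] [DecidableEq X]
    (H : Set (Set X)) (hUUS : ∀ h ∈ H, h.Infinite)
    (G : List X → X) (d : ℕ)
    (hG : ∀ h ∈ H, ∀ x : ℕ → X, (∀ t, x t ∈ h) → UnifSucc h G x d) :
    ∃ G' : List X → X, ∀ h ∈ H, ∀ x : ℕ → X,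
      ReplaySeq h G' x → UnifSucc h G' x d := by
  classical
  refine ⟨fun l => if l.toFinset.card < d then l.headD (G l) else G l, ?_⟩
  intro h hH x hx
  set G' : List X → X :=
    fun l => if l.toFinset.card < d then l.headD (G l) else G l with hG'
  have hlist : ∀ s : ℕ, ((List.range s).map x).toFinset = (Finset.range s).image x := by
    intro s; ext a; simp [Finset.mem_range]
  have hx0 : x 0 ∈ h := by
    rcases hx 0 with h0 | ⟨s, hs1, hs0, _⟩
    · exact h0
    · omega
  have hhead : ∀ s a, 1 ≤ s → ((List.range s).map x).headD a = x 0 := by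
    intro s a hs
    obtain ⟨k, rfl⟩ : ∃ k, s = k + 1 := ⟨s - 1, by omega⟩
    rw [List.range_succ_eq_map]
    simp
  have hcard0 : ((Finset.range 0).image x).card = 0 := by simp
  have hcardstep : ∀ n, ((Finset.range (n+1)).image x).card ≤ ((Finset.range n).image x).card + 1 := by
    intro n
    rw [Finset.range_add_one, Finset.image_insert]
    exact Finset.card_insert_le _ _
  have hmem : ∀ t, x t ∈ h := by
    intro t
    induction t using Nat.strong_induction_on with
    | _ t ih =>
      rcases hx t with h1 | ⟨s, hs1, hst, heq⟩
      · exact h1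
      · rw [heq]
        show G' ((List.range s).map x) ∈ h
        by_cases hc : ((List.range s).map x).toFinset.card < d
        · simp only [hG', if_pos hc]
          rw [hhead s _ hs1]
          exact hx0
        · push_neg at hc
          rw [hlist] at hc
          obtain ⟨x0, hx0m⟩ := (hUUS h hH).nonempty
          set y : ℕ → X := fun r => if r < s then x r else x0 with hy
          have hy_mem : ∀ r, y r ∈ h := by
            intro r; by_cases hr : r < s
            · simpa [hy, hr] using ih r (lt_of_lt_of_le hr hst)
            · simpa [hy, hr] using hx0m
          have hyG := hG h hH y hy_mem
          obtain ⟨m, hms, hcm⟩ := ivt_aux (fun n => ((Finset.range n).image x).card)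
            hcard0 hcardstep s d hc
          have himg : (Finset.range m).image y = (Finset.range m).image x := by
            apply Finset.image_congr
            intro r hr
            simp only [Finset.coe_range, Set.mem_Iio] at hr
            have hrs : r < s := lt_of_lt_of_le hr hms
            simp [hy, hrs]
          have hsucc := hyG m (by rw [himg]; exact hcm) s hms
          have hout : Out G y s = G ((List.range s).map x) := by
            unfold Out
            congr 1
            apply List.map_congr_left
            intro r hr
            rw [List.mem_range] at hr
            simp [hy, hr]
          have hnc : ¬ ((List.range s).map x).toFinset.card < d := by
            rw [hlist]; exact not_lt.mpr hc
          simp only [hG']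
          rw [if_neg hnc, ← hout]
          exact hsucc.1
  have hxG := hG h hH x hmem
  intro t hcard s hts
  have hcge : d ≤ ((List.range s).map x).toFinset.card := by
    rw [hlist]
    calc d = ((Finset.range t).image x).card := hcard.symm
      _ ≤ ((Finset.range s).image x).card :=
        Finset.card_le_card (Finset.image_subset_image (Finset.range_subset_range.mpr hts))
  have hOut : Out G' x s = Out G x s := by
    show G' ((List.range s).map x) = _
    simp only [hG', if_neg (not_lt.mpr hcge)]
    rfl
  rw [hOut]
  exact hxG t hcard s hts
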